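/- For the Stiefel manifold V_2 R^n with tangent space m = m_{12} ⊕ m_{13} ⊕ m_{23} ⊂ so(n) and the Einstein metric Λ = 1·Id_{m_{12}} + λ·Id_{m_{13}} + λ·Id_{m_{23}} (λ > 0, λ ≠ 1), a vector X = a_{12}ξ_{12} + Σ_{j=3}^n (a_{1j}ξ_{1j} + a_{2j}ξ_{2j}) satisfies [X, ΛX]_m = 0 if and only if a_{12}a_{1j} = 0 and a_{12}a_{2j} = 0 for all 3 ≤ j ≤ n; equivalently, if and only if either a_{12} = 0 (i.e., X ∈ m_{13} ⊕ m_{23}) or all a_{1j} = a_{2j} = 0 (i.e., X ∈ m_{12}). -/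

import Mathlib

open Matrix

section

attribute [local instance 100] LieRing.ofAssociativeRing

/-- `ξ a b = E_{ab} - E_{ba}` in the n×n real matrices. -/
noncomputable def xiM {n : ℕ} (a b : Fin n) : Matrix (Fin n) (Fin n) ℝ :=
  Matrix.single a b 1 - Matrix.single b a 1

/-- Projection of `so(n)` onto `m` along `so(n-2)`. -/
noncomputable def projV (n : ℕ) (A : Matrix (Fin n) (Fin n) ℝ) :
    Matrix (Fin n) (Fin n) ℝ :=
  Matrix.of fun i j => if i.val < 2 ∨ j.val < 2 then A i j else 0

lemma lie_xi_left {n : ℕ} (a b c : Fin n) (hab : a ≠ b) (hac : a ≠ c) (hbc : b ≠ c) :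
    ⁅xiM a b, xiM a c⁆ = -(xiM b c) := by
  simp only [xiM, Ring.lie_def, sub_mul, mul_sub,
    Matrix.single_mul_single_same, Matrix.single_mul_single_of_ne,
    hab, hac, hbc, hab.symm, hac.symm, hbc.symm, Ne, not_false_iff, one_mul]
  abel

lemma lie_xi_mid {n : ℕ} (a b c : Fin n) (hab : a ≠ b) (hac : a ≠ c) (hbc : b ≠ c) :
    ⁅xiM a b, xiM b c⁆ = xiM a c := by
  simp only [xiM, Ring.lie_def, sub_mul, mul_sub,
    Matrix.single_mul_single_same, Matrix.single_mul_single_of_ne,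
    hab, hac, hbc, hab.symm, hac.symm, hbc.symm, Ne, not_false_iff, one_mul]
  abel

lemma lie_sum' {L : Type*} [LieRing L] {ι : Type*} (x : L) (s : Finset ι) (f : ι → L) :
    ⁅x, ∑ i ∈ s, f i⁆ = ∑ i ∈ s, ⁅x, f i⁆ := by
  induction s using Finset.cons_induction with
  | empty => simp
  | cons a s ha ih => simp [Finset.sum_cons, lie_add, ih]

end


/-- Einstein equigeodesic vectors on `(V₂ℝⁿ, Λ = (1, λ, λ))`. -/
theorem stmt8 (n : ℕ) (hn : 2 ≤ n) (lam : ℝ) (hlam : 0 < lam) (hne : lam ≠ 1)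
    (a12 : ℝ) (a1 a2 : Fin n → ℝ) :
    let i0 : Fin n := ⟨0, by omega⟩
    let i1 : Fin n := ⟨1, by omega⟩
    let X12 := a12 • xiM i0 i1
    let X13 := ∑ j ∈ Finset.univ.filter (fun j : Fin n => 2 ≤ j.val),
      a1 j • xiM i0 j
    let X23 := ∑ j ∈ Finset.univ.filter (fun j : Fin n => 2 ≤ j.val),
      a2 j • xiM i1 j
    let X := X12 + X13 + X23
    let LX := X12 + lam • (X13 + X23)
    (projV n ⁅X, LX⁆ = 0 ↔
      ∀ j : Fin n, 2 ≤ j.val → a12 * a1 j = 0 ∧ a12 * a2 j = 0) ∧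
    (projV n ⁅X, LX⁆ = 0 ↔
      (a12 = 0 ∨ ∀ j : Fin n, 2 ≤ j.val → a1 j = 0 ∧ a2 j = 0)) := by
  intro i0 i1 X12 X13 X23 X LX
  letI : LieRing (Matrix (Fin n) (Fin n) ℝ) := LieRing.ofAssociativeRing
  set S := Finset.univ.filter (fun j : Fin n => 2 ≤ j.val) with hS
  have hmemS : ∀ j : Fin n, j ∈ S ↔ 2 ≤ j.val := by
    intro j; simp [hS]
  have h01 : i0 ≠ i1 := by simp [i0, i1, Fin.ext_iff]
  have hv0 : (i0 : Fin n).val = 0 := rfl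
  have hv1 : (i1 : Fin n).val = 1 := rfl
  have h0j : ∀ j ∈ S, i0 ≠ j := by
    intro j hj
    have := (hmemS j).mp hj
    exact Fin.ne_of_val_ne (by rw [hv0]; omega)
  have h1j : ∀ j ∈ S, i1 ≠ j := by
    intro j hj
    have := (hmemS j).mp hj
    exact Fin.ne_of_val_ne (by rw [hv1]; omega)
  have hW : ⁅X12, X13 + X23⁆
      = ∑ j ∈ S, ((a12 * a1 j) • (-(xiM i1 j)) + (a12 * a2 j) • xiM i0 j) := by
    show ⁅a12 • xiM i0 i1, (∑ j ∈ S, a1 j • xiM i0 j) + ∑ j ∈ S, a2 j • xiM i1 j⁆ = _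
    rw [smul_lie, lie_add, lie_sum', lie_sum']
    have e1 : ∑ j ∈ S, ⁅xiM i0 i1, a1 j • xiM i0 j⁆ = ∑ j ∈ S, a1 j • (-(xiM i1 j)) :=
      Finset.sum_congr rfl fun j hj => by
        rw [lie_smul, lie_xi_left i0 i1 j h01 (h0j j hj) (h1j j hj)]
    have e2 : ∑ j ∈ S, ⁅xiM i0 i1, a2 j • xiM i1 j⁆ = ∑ j ∈ S, a2 j • xiM i0 j :=
      Finset.sum_congr rfl fun j hj => by
        rw [lie_smul, lie_xi_mid i0 i1 j h01 (h0j j hj) (h1j j hj)]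
    rw [e1, e2, smul_add, Finset.smul_sum, Finset.smul_sum, ← Finset.sum_add_distrib]
    exact Finset.sum_congr rfl fun j hj => by rw [smul_smul, smul_smul]
  have hskew : ⁅X13 + X23, X12⁆ = -⁅X12, X13 + X23⁆ := by
    rw [← lie_skew]
  have hXLX : ⁅X, LX⁆
      = (lam - 1) • ∑ j ∈ S, ((a12 * a1 j) • (-(xiM i1 j)) + (a12 * a2 j) • xiM i0 j) := by
    have h1 : ⁅X, LX⁆ = (lam - 1) • ⁅X12, X13 + X23⁆ := by
      show ⁅X12 + X13 + X23, X12 + lam • (X13 + X23)⁆ = _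
      rw [add_assoc, add_lie, lie_add, lie_add, lie_self, hskew, lie_smul, lie_smul,
        lie_self, smul_zero, sub_smul, one_smul]
      abel
    rw [h1, hW]
  set Z : Matrix (Fin n) (Fin n) ℝ :=
    ∑ j ∈ S, ((a12 * a1 j) • (-(xiM i1 j)) + (a12 * a2 j) • xiM i0 j) with hZ
  have hlam1 : lam - 1 ≠ 0 := sub_ne_zero.mpr hne
  have hZ0 : ∀ j ∈ S, Z i0 j = a12 * a2 j := by
    intro j hj
    rw [hZ, Matrix.sum_apply, Finset.sum_eq_single j]
    · simp [xiM, h01.symm, Ne.symm (h0j j hj), Ne.symm (h1j j hj)]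
    · intro k hk hkj
      simp [xiM, h01.symm, Ne.symm (h0j k hk), Ne.symm (h1j k hk), hkj]
    · intro h; exact (h hj).elim
  have hZ1 : ∀ j ∈ S, Z i1 j = -(a12 * a1 j) := by
    intro j hj
    rw [hZ, Matrix.sum_apply, Finset.sum_eq_single j]
    · simp [xiM, h01, Ne.symm (h0j j hj), Ne.symm (h1j j hj)]
    · intro k hk hkj
      simp [xiM, h01, Ne.symm (h0j k hk), Ne.symm (h1j k hk), hkj]
    · intro h; exact (h hj).elim
  rw [hXLX]
  have main : projV n ((lam - 1) • Z) = 0 ↔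
      ∀ j : Fin n, 2 ≤ j.val → a12 * a1 j = 0 ∧ a12 * a2 j = 0 := by
    constructor
    · intro hp j hj2
      have hjS : j ∈ S := (hmemS j).mpr hj2
      have e0 := congrFun (congrFun hp i0) j
      have e1 := congrFun (congrFun hp i1) j
      simp only [projV, Matrix.of_apply, hv0, hv1, Matrix.zero_apply,
        Matrix.smul_apply, smul_eq_mul] at e0 e1
      rw [if_pos (Or.inl (by omega)), hZ0 j hjS] at e0
      rw [if_pos (Or.inl (by omega)), hZ1 j hjS] at e1
      constructor
      · rcases mul_eq_zero.mp e1 with h | h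
        · exact absurd h hlam1
        · exact neg_eq_zero.mp h
      · rcases mul_eq_zero.mp e0 with h | h
        · exact absurd h hlam1
        · exact h
    · intro h
      have hZ' : Z = 0 := by
        rw [hZ]
        refine Finset.sum_eq_zero fun j hj => ?_
        obtain ⟨h1, h2⟩ := h j ((hmemS j).mp hj)
        rw [h1, h2, zero_smul, zero_smul, add_zero]
      rw [hZ', smul_zero]
      ext i j
      simp [projV]
  refine ⟨main, main.trans ?_⟩
  constructor
  · intro h
    by_cases ha : a12 = 0
    · exact Or.inl ha
    · refine Or.inr fun j hj => ?_
      obtain ⟨h1, h2⟩ := h j hj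
      exact ⟨(mul_eq_zero.mp h1).resolve_left ha, (mul_eq_zero.mp h2).resolve_left ha⟩
  · rintro (h | h) j hj
    · simp [h]
    · obtain ⟨h1, h2⟩ := h j hj
      simp [h1, h2]
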